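/- Let t : Fin n → k and let D : A → A be a k-linear map satisfying the graded Leibniz rule with D(x_i) = x_i * w_t for all i ∈ Fin n. Then the subgroup of the group of k-algebra automorphisms of A consisting of those f with f(x_i) homogeneous of degree 1 for every i and f ∘ D = D ∘ f is isomorphic, as a group, to the subgroup {M ∈ GL_n(k) | ∑_{j} t j * M j s = t s for all s ∈ Fin n} of GL_n(k). -/

import Mathlib

open MvPolynomial

namespace Stmt5Aux

variable {k : Type*} [Field k] {n : ℕ}

lemma deg_one {m : Fin n →₀ ℕ} (hm : Finsupp.degree m = 1) :
    ∃ j, m = Finsupp.single j 1 := by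
  have hne : m ≠ 0 := by
    rintro rfl; simp [map_zero] at hm
  obtain ⟨j, hj⟩ := Finsupp.support_nonempty_iff.mpr hne
  refine ⟨j, ?_⟩
  have hj1 : m j ≠ 0 := Finsupp.mem_support_iff.mp hj
  have hmj : m j = 1 :=
    le_antisymm (hm ▸ Finsupp.le_degree j m) (Nat.one_le_iff_ne_zero.mpr hj1)
  have hsum : m j + ∑ i ∈ m.support.erase j, m i = 1 := by
    rw [Finset.add_sum_erase _ _ hj]; exact hm
  have hz : ∀ i ∈ m.support.erase j, m i = 0 := by
    rw [hmj] at hsum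
    have : ∑ i ∈ m.support.erase j, m i = 0 := by omega
    exact fun i hi => Finset.sum_eq_zero_iff.mp this i hi
  refine Finsupp.eq_single_iff.mpr ⟨?_, hmj⟩
  intro i hi
  by_contra hij
  have : i ∈ m.support.erase j := Finset.mem_erase.mpr ⟨by simpa using hij, hi⟩
  exact Finsupp.mem_support_iff.mp hi (hz i this)

lemma homog_one_repr {p : MvPolynomial (Fin n) k} (hp : p.IsHomogeneous 1) :
    p = ∑ j : Fin n, coeff (Finsupp.single j 1) p • X j := by
  classical
  apply MvPolynomial.ext
  intro m
  rw [coeff_sum]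
  simp only [coeff_smul, coeff_X', smul_eq_mul, mul_ite, mul_one, mul_zero]
  by_cases hm : ∃ j, m = Finsupp.single j 1
  · obtain ⟨j, rfl⟩ := hm
    rw [Finset.sum_eq_single j]
    · simp
    · intro b _ hb
      rw [if_neg]
      intro h
      exact hb (by
        have := (Finsupp.single_eq_single_iff _ _ _ _).mp h
        rcases this with ⟨h1, _⟩ | ⟨h1, _⟩ <;> simp_all)
    · simp
  · rw [Finset.sum_eq_zero, eq_comm]
    · by_contra hc
      have hdeg : Finsupp.degree m = 1 := by
        have := hp (Ne.symm hc)
        rwa [Finsupp.degree_eq_weight_one]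
      exact hm (deg_one hdeg)
    · intro j _
      rw [if_neg]
      intro h
      exact hm ⟨j, h.symm⟩

lemma homog_one_mem_span {p : MvPolynomial (Fin n) k} (hp : p.IsHomogeneous 1) :
    p ∈ Submodule.span k (Set.range (X : Fin n → MvPolynomial (Fin n) k)) := by
  rw [homog_one_repr hp]
  exact Submodule.sum_mem _ fun j _ =>
    Submodule.smul_mem _ _ (Submodule.subset_span ⟨j, rfl⟩)

lemma span_le_homog :
    Submodule.span k (Set.range (X : Fin n → MvPolynomial (Fin n) k)) ≤
      homogeneousSubmodule (Fin n) k 1 := by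
  rw [Submodule.span_le]
  rintro _ ⟨j, rfl⟩
  exact isHomogeneous_X k j

/-- An algebra endomorphism sending variables to homogeneous degree-1 elements preserves
homogeneity. -/
lemma preserve_homog (g : MvPolynomial (Fin n) k →ₐ[k] MvPolynomial (Fin n) k)
    (hg : ∀ i, (g (X i)).IsHomogeneous 1) {p : MvPolynomial (Fin n) k} {d : ℕ}
    (hp : p.IsHomogeneous d) : (g p).IsHomogeneous d := by
  have : g p = aeval (⇑g ∘ X) p := DFunLike.congr_fun (MvPolynomial.aeval_unique g) p
  rw [this]
  simpa [Function.comp_def] using hp.aeval _ (fun i => hg i)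


section D

variable (t : Fin n → k)
variable (D : MvPolynomial (Fin n) k →ₗ[k] MvPolynomial (Fin n) k)
variable (hLeib : ∀ (d : ℕ) (a b : MvPolynomial (Fin n) k), a.IsHomogeneous d →
      D (a * b) = D a * b + ((-1 : k) ^ d) • (a * D b))
variable (hD : ∀ i : Fin n, D (X i) = X i * ∑ j : Fin n, t j • X j)

include hLeib in
lemma D_one : D 1 = 0 := by
  have := hLeib 0 1 1 (isHomogeneous_one _ _)
  simp only [one_mul, mul_one, pow_zero, one_smul] at this
  have h2 : D 1 = D 1 + D 1 := by simpa using this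
  exact left_eq_add.mp h2

include hD in
lemma D_lin (c : Fin n → k) :
    D (∑ j : Fin n, c j • X j) = (∑ j : Fin n, c j • X j) * ∑ j : Fin n, t j • X j := by
  rw [map_sum, Finset.sum_mul]
  exact Finset.sum_congr rfl fun j _ => by rw [map_smul, hD j, smul_mul_assoc]

include hD in
lemma D_homog_one {p : MvPolynomial (Fin n) k} (hp : p.IsHomogeneous 1) :
    D p = p * ∑ j : Fin n, t j • X j := by
  conv_lhs => rw [homog_one_repr hp]
  rw [D_lin t D hD, ← homog_one_repr hp]

include hLeib hD in
/-- Key lemma: an algebra endomorphism with homogeneous degree-1 images of variables that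
fixes `w_t` commutes with `D`. -/
lemma commute_D (g : MvPolynomial (Fin n) k →ₐ[k] MvPolynomial (Fin n) k)
    (hg1 : ∀ i, (g (X i)).IsHomogeneous 1)
    (hgw : g (∑ j : Fin n, t j • X j) = ∑ j : Fin n, t j • X j)
    (p : MvPolynomial (Fin n) k) : g (D p) = D (g p) := by
  classical
  -- first, on monomials, by induction on degree
  have key : ∀ N (s : Fin n →₀ ℕ), Finsupp.degree s = N →
      g (D (monomial s 1)) = D (g (monomial s 1)) := by
    intro N
    induction N with
    | zero =>
      intro s hs
      rw [Finsupp.degree_eq_zero_iff] at hs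
      subst hs
      rw [show (monomial (0 : Fin n →₀ ℕ)) (1 : k) = 1 from by simp [monomial_zero'],
        D_one D hLeib]
      simp [D_one D hLeib]
    | succ N ih =>
      intro s hs
      -- find a variable in the support
      have hne : s ≠ 0 := by
        intro h; rw [h] at hs; simp at hs
      obtain ⟨i, hi⟩ := Finsupp.support_nonempty_iff.mpr hne
      have hi1 : 1 ≤ s i := Nat.one_le_iff_ne_zero.mpr (Finsupp.mem_support_iff.mp hi)
      set s' : Fin n →₀ ℕ := s - Finsupp.single i 1 with hs'
      have hadd : s' + Finsupp.single i 1 = s := by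
        ext a
        simp only [Finsupp.add_apply, Finsupp.coe_tsub, Pi.sub_apply, hs',
          Finsupp.single_apply]
        split_ifs with h
        · subst h; omega
        · omega
      have hdsingle : Finsupp.degree (Finsupp.single i (1 : ℕ)) = 1 := by
        simp [Finsupp.degree_single]
      have hdadd : Finsupp.degree (s' + Finsupp.single i 1) =
          Finsupp.degree s' + Finsupp.degree (Finsupp.single i 1) := by
        simp only [Finsupp.degree_eq_weight_one]
        exact map_add _ _ _
      have hdeg' : Finsupp.degree s' = N := by
        rw [hadd, hs, hdsingle] at hdadd
        omega
      have hmono : (monomial s (1 : k)) = monomial s' 1 * X i := by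
        rw [X, monomial_mul, hadd, mul_one]
      have hhom' : (monomial s' (1 : k)).IsHomogeneous N :=
        isHomogeneous_monomial _ hdeg'
      have hghom' : (g (monomial s' 1)).IsHomogeneous N :=
        preserve_homog g hg1 hhom'
      rw [hmono]
      calc g (D (monomial s' 1 * X i))
          = g (D (monomial s' 1)) * g (X i)
            + (-1:k)^N • (g (monomial s' 1) * (g (X i) * ∑ j : Fin n, t j • X j)) := by
            rw [hLeib N _ (X i) hhom', map_add, map_mul, map_smul, map_mul,
              hD i, map_mul, hgw]
        _ = D (g (monomial s' 1)) * g (X i)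
            + (-1:k)^N • (g (monomial s' 1) * D (g (X i))) := by
            rw [ih s' hdeg', D_homog_one t D hD (hg1 i)]
        _ = D (g (monomial s' 1) * g (X i)) := (hLeib N _ _ hghom').symm
        _ = D (g (monomial s' 1 * X i)) := by rw [map_mul g]
  -- extend by linearity
  induction p using MvPolynomial.induction_on' with
  | monomial u a =>
    have : (monomial u) a = a • monomial u 1 := by
      rw [smul_monomial, smul_eq_mul, mul_one]
    rw [this, map_smul, map_smul, map_smul, map_smul, key (Finsupp.degree u) u rfl]
  | add p q hp hq =>
    rw [map_add, map_add, map_add, map_add, hp, hq]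

end D

/-- Inverse of an automorphism with degree-1 homogeneous images also has degree-1
homogeneous images. -/
lemma symm_homog (f : MvPolynomial (Fin n) k ≃ₐ[k] MvPolynomial (Fin n) k)
    (hf : ∀ i, (f (X i)).IsHomogeneous 1) (i : Fin n) :
    (f.symm (X i)).IsHomogeneous 1 := by
  classical
  set W : Submodule k (MvPolynomial (Fin n) k) :=
    Submodule.span k (Set.range (X : Fin n → MvPolynomial (Fin n) k)) with hW
  haveI : FiniteDimensional k W :=
    FiniteDimensional.span_of_finite k (Set.finite_range _)
  have hmap : ∀ x ∈ W, f.toLinearMap x ∈ W := by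
    intro x hx
    induction hx using Submodule.span_induction with
    | mem y hy =>
      obtain ⟨j, rfl⟩ := hy
      exact homog_one_mem_span (hf j)
    | zero => simp
    | add a b _ _ ha hb => rw [map_add]; exact W.add_mem ha hb
    | smul c a _ ha => rw [map_smul]; exact W.smul_mem c ha
  set φ : W →ₗ[k] W := f.toLinearMap.restrict hmap with hφ
  have hinj : Function.Injective φ := by
    intro a b hab
    apply Subtype.ext
    apply f.injective
    exact congrArg Subtype.val hab
  have hsurj : Function.Surjective φ := LinearMap.surjective_of_injective hinj
  obtain ⟨y, hy⟩ := hsurj ⟨X i, Submodule.subset_span ⟨i, rfl⟩⟩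
  have hy' : f y.val = X i := congrArg Subtype.val hy
  have : f.symm (X i) = y.val := by
    rw [← hy', AlgEquiv.symm_apply_apply]
  rw [this]
  exact span_le_homog y.2


lemma single_one_inj {i j : Fin n}
    (h : (Finsupp.single i 1 : Fin n →₀ ℕ) = Finsupp.single j 1) : i = j := by
  rcases (Finsupp.single_eq_single_iff _ _ _ _).mp h with ⟨h1, _⟩ | ⟨h1, _⟩
  · exact h1
  · simp at h1

lemma coeff_lin (c : Fin n → k) (j : Fin n) :
    coeff (Finsupp.single j 1) (∑ i : Fin n, c i • X i) = c j := by
  classical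
  rw [coeff_sum]
  simp only [coeff_smul, coeff_X', smul_eq_mul, mul_ite, mul_one, mul_zero]
  rw [Finset.sum_eq_single j]
  · simp
  · intro b _ hb
    rw [if_neg fun h => hb (single_one_inj h)]
  · simp

/-- The matrix of an automorphism on the degree-one part. -/
noncomputable def mat (g : MvPolynomial (Fin n) k ≃ₐ[k] MvPolynomial (Fin n) k) :
    Matrix (Fin n) (Fin n) k :=
  Matrix.of fun i j => coeff (Finsupp.single j 1) (g (X i))

lemma mat_repr {g : MvPolynomial (Fin n) k ≃ₐ[k] MvPolynomial (Fin n) k}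
    (hg : ∀ i, (g (X i)).IsHomogeneous 1) (i : Fin n) :
    g (X i) = ∑ j : Fin n, mat g i j • X j :=
  homog_one_repr (hg i)

lemma mat_one : mat (1 : MvPolynomial (Fin n) k ≃ₐ[k] MvPolynomial (Fin n) k) = 1 := by
  classical
  ext i j
  simp only [mat, Matrix.of_apply, AlgEquiv.one_apply, coeff_X', Matrix.one_apply]
  by_cases h : i = j
  · subst h; simp
  · rw [if_neg fun hc => h (single_one_inj hc), if_neg h]

lemma mat_mul (e₁ e₂ : MvPolynomial (Fin n) k ≃ₐ[k] MvPolynomial (Fin n) k)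
    (h₂ : ∀ i, (e₂ (X i)).IsHomogeneous 1) :
    mat (e₁ * e₂) = mat e₂ * mat e₁ := by
  ext i s
  show coeff (Finsupp.single s 1) (e₁ (e₂ (X i))) = _
  rw [mat_repr h₂ i, map_sum, coeff_sum]
  simp only [map_smul, coeff_smul, smul_eq_mul]
  rw [Matrix.mul_apply]
  rfl

section D2

variable (t : Fin n → k)
variable (D : MvPolynomial (Fin n) k →ₗ[k] MvPolynomial (Fin n) k)
variable (hD : ∀ i : Fin n, D (X i) = X i * ∑ j : Fin n, t j • X j)

include hD in
lemma fixes_w (g : MvPolynomial (Fin n) k ≃ₐ[k] MvPolynomial (Fin n) k)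
    (hg1 : ∀ i, (g (X i)).IsHomogeneous 1)
    (hgD : ∀ a, g (D a) = D (g a)) :
    g (∑ j : Fin n, t j • X j) = ∑ j : Fin n, t j • X j := by
  rcases Nat.eq_zero_or_pos n with hn | hn
  · subst hn
    simp
  · set i : Fin n := ⟨0, hn⟩
    have h1 : g (D (X i)) = D (g (X i)) := hgD (X i)
    rw [hD i, map_mul, D_homog_one t D hD (hg1 i)] at h1
    have h2 : g (X i) ≠ 0 := fun hc =>
      X_ne_zero i (g.injective (hc.trans (map_zero g).symm))
    exact mul_left_cancel₀ h2 h1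

end D2

lemma row_condition {g : MvPolynomial (Fin n) k ≃ₐ[k] MvPolynomial (Fin n) k} (t : Fin n → k)
    (hgw : g (∑ j : Fin n, t j • X j) = ∑ j : Fin n, t j • X j) (j : Fin n) :
    ∑ i : Fin n, t i * mat g i j = t j := by
  have h1 : coeff (Finsupp.single j 1) (g (∑ i : Fin n, t i • X i)) = t j := by
    rw [hgw, coeff_lin]
  rw [map_sum, coeff_sum] at h1
  simp only [map_smul, coeff_smul, smul_eq_mul] at h1
  exact h1


lemma lin_isHomog (c : Fin n → k) :
    (∑ j : Fin n, c j • X j : MvPolynomial (Fin n) k).IsHomogeneous 1 := by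
  rw [← mem_homogeneousSubmodule]
  exact Submodule.sum_mem _ fun j _ => Submodule.smul_mem _ _ (isHomogeneous_X k j)

lemma sum_one_smul (i : Fin n) :
    ∑ j : Fin n, (1 : Matrix (Fin n) (Fin n) k) i j • X j = (X i : MvPolynomial (Fin n) k) := by
  classical
  rw [Finset.sum_eq_single i]
  · simp
  · intro b _ hb
    rw [Matrix.one_apply_ne (Ne.symm hb), zero_smul]
  · simp

/-- The algebra endomorphism determined by a matrix. -/
noncomputable def linAlgHom (P : Matrix (Fin n) (Fin n) k) :
    MvPolynomial (Fin n) k →ₐ[k] MvPolynomial (Fin n) k :=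
  aeval fun i => ∑ j : Fin n, P i j • X j

lemma linAlgHom_X (P : Matrix (Fin n) (Fin n) k) (i : Fin n) :
    linAlgHom P (X i) = ∑ j : Fin n, P i j • X j := aeval_X _ i

lemma linAlgHom_comp_X (P Q : Matrix (Fin n) (Fin n) k) (i : Fin n) :
    linAlgHom P (linAlgHom Q (X i)) = ∑ s : Fin n, (Q * P) i s • X s := by
  rw [linAlgHom_X, map_sum]
  simp only [map_smul, linAlgHom_X, Finset.smul_sum, smul_smul]
  rw [Finset.sum_comm]
  refine Finset.sum_congr rfl fun s _ => ?_
  rw [Matrix.mul_apply, Finset.sum_smul]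

lemma linAlgHom_comp (P Q : Matrix (Fin n) (Fin n) k) (h : Q * P = 1) :
    (linAlgHom P).comp (linAlgHom Q) = AlgHom.id k (MvPolynomial (Fin n) k) := by
  apply MvPolynomial.algHom_ext
  intro i
  rw [AlgHom.comp_apply, linAlgHom_comp_X, h, AlgHom.id_apply, sum_one_smul]

/-- The algebra automorphism determined by an invertible matrix. -/
noncomputable def linEquiv (M : Matrix.GeneralLinearGroup (Fin n) k) :
    MvPolynomial (Fin n) k ≃ₐ[k] MvPolynomial (Fin n) k :=
  AlgEquiv.ofAlgHom (linAlgHom M.val) (linAlgHom M.inv)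
    (linAlgHom_comp _ _ M.inv_val) (linAlgHom_comp _ _ M.val_inv)

lemma linEquiv_X (M : Matrix.GeneralLinearGroup (Fin n) k) (i : Fin n) :
    linEquiv M (X i) = ∑ j : Fin n, M.val i j • X j := linAlgHom_X _ i

lemma linEquiv_hom1 (M : Matrix.GeneralLinearGroup (Fin n) k) (i : Fin n) :
    (linEquiv M (X i)).IsHomogeneous 1 := by
  rw [linEquiv_X]; exact lin_isHomog _

lemma mat_linEquiv (M : Matrix.GeneralLinearGroup (Fin n) k) :
    mat (linEquiv M) = M.val := by
  ext i j
  show coeff (Finsupp.single j 1) (linEquiv M (X i)) = M.val i j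
  rw [linEquiv_X, coeff_lin]

lemma linEquiv_fix_w (t : Fin n → k) (M : Matrix.GeneralLinearGroup (Fin n) k)
    (hM : ∀ s, ∑ j : Fin n, t j * M.val j s = t s) :
    linEquiv M (∑ j : Fin n, t j • X j) = ∑ j : Fin n, t j • X j := by
  rw [map_sum]
  simp only [map_smul, linEquiv_X, Finset.smul_sum, smul_smul]
  rw [Finset.sum_comm]
  refine Finset.sum_congr rfl fun s _ => ?_
  rw [← Finset.sum_smul, hM s]

end Stmt5Aux

open Stmt5Aux

/-- The group of DG automorphisms of the DG polynomial algebra `A(t)`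
(algebra automorphisms `f` with each `f (X i)` homogeneous of degree 1 commuting with the
differential `D`) is isomorphic to the subgroup
`{M ∈ GL_n(k) | ∑ j, t j * M j s = t s for all s}` of `GL_n(k)`. -/
theorem stmt_5 (k : Type*) [Field k] [CharZero k] (n : ℕ) (t : Fin n → k)
    (D : MvPolynomial (Fin n) k →ₗ[k] MvPolynomial (Fin n) k)
    (hLeib : ∀ (d : ℕ) (a b : MvPolynomial (Fin n) k), a.IsHomogeneous d →
      D (a * b) = D a * b + ((-1 : k) ^ d) • (a * D b))
    (hD : ∀ i : Fin n, D (X i) = X i * ∑ j : Fin n, t j • X j) :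
    ∃ (G₁ : Subgroup (MvPolynomial (Fin n) k ≃ₐ[k] MvPolynomial (Fin n) k))
      (G₂ : Subgroup (Matrix.GeneralLinearGroup (Fin n) k)),
      (∀ f, f ∈ G₁ ↔
        ((∀ i : Fin n, (f (X i)).IsHomogeneous 1) ∧
          (∀ a : MvPolynomial (Fin n) k, f (D a) = D (f a)))) ∧
      (∀ M : Matrix.GeneralLinearGroup (Fin n) k, M ∈ G₂ ↔
        (∀ s : Fin n, ∑ j : Fin n, t j * (M : Matrix (Fin n) (Fin n) k) j s = t s)) ∧
      Nonempty (G₁ ≃* G₂) := by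
  classical
  -- inverses stay in the carrier of G₁
  have hsymm : ∀ f : MvPolynomial (Fin n) k ≃ₐ[k] MvPolynomial (Fin n) k,
      (∀ i, (f (X i)).IsHomogeneous 1) → (∀ a, f (D a) = D (f a)) →
      (∀ i, (f.symm (X i)).IsHomogeneous 1) ∧ (∀ a, f.symm (D a) = D (f.symm a)) := by
    intro f hf1 hf2
    refine ⟨symm_homog f hf1, fun a => ?_⟩
    have h := hf2 (f.symm a)
    rw [AlgEquiv.apply_symm_apply] at h
    rw [← h, AlgEquiv.symm_apply_apply]
  set G₁ : Subgroup (MvPolynomial (Fin n) k ≃ₐ[k] MvPolynomial (Fin n) k) :=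
    { carrier := {f | (∀ i : Fin n, (f (X i)).IsHomogeneous 1) ∧
        (∀ a : MvPolynomial (Fin n) k, f (D a) = D (f a))}
      one_mem' := ⟨fun i => isHomogeneous_X k i, fun a => rfl⟩
      mul_mem' := by
        rintro a b ⟨ha1, ha2⟩ ⟨hb1, hb2⟩
        refine ⟨fun i => ?_, fun x => ?_⟩
        · exact preserve_homog (a : MvPolynomial (Fin n) k →ₐ[k] MvPolynomial (Fin n) k)
            (fun j => ha1 j) (hb1 i)
        · show a (b (D x)) = D (a (b x))
          rw [hb2 x, ha2 (b x)]
      inv_mem' := by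
        rintro f ⟨hf1, hf2⟩
        exact (hsymm f hf1 hf2 : _) } with hG₁
  set G₂ : Subgroup (Matrix.GeneralLinearGroup (Fin n) k) :=
    { carrier := {M | Matrix.vecMul t (M : Matrix (Fin n) (Fin n) k) = t}
      one_mem' := by
        show Matrix.vecMul t (1 : Matrix (Fin n) (Fin n) k) = t
        simp [Matrix.vecMul_one]
      mul_mem' := by
        rintro a b ha hb
        show Matrix.vecMul t ((a * b : Matrix.GeneralLinearGroup (Fin n) k) :
          Matrix (Fin n) (Fin n) k) = t
        rw [Units.val_mul, ← Matrix.vecMul_vecMul]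
        rw [Set.mem_setOf_eq] at ha hb
        rw [ha, hb]
      inv_mem' := by
        intro M hM
        rw [Set.mem_setOf_eq] at hM ⊢
        calc Matrix.vecMul t ((M⁻¹ : Matrix.GeneralLinearGroup (Fin n) k) :
              Matrix (Fin n) (Fin n) k)
            = Matrix.vecMul (Matrix.vecMul t (M : Matrix (Fin n) (Fin n) k))
              ((M⁻¹ : Matrix.GeneralLinearGroup (Fin n) k) : Matrix (Fin n) (Fin n) k) := by
              rw [hM]
          _ = Matrix.vecMul t ((M : Matrix (Fin n) (Fin n) k) *
              ((M⁻¹ : Matrix.GeneralLinearGroup (Fin n) k) : Matrix (Fin n) (Fin n) k)) :=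
              Matrix.vecMul_vecMul _ _ _
          _ = t := by rw [← Units.val_mul, mul_inv_cancel, Units.val_one, Matrix.vecMul_one] }
    with hG₂
  -- the isomorphism
  have mem1 : ∀ f : G₁, (∀ i, ((f : MvPolynomial (Fin n) k ≃ₐ[k] MvPolynomial (Fin n) k)
      (X i)).IsHomogeneous 1) ∧ ∀ a, (f : MvPolynomial (Fin n) k ≃ₐ[k] MvPolynomial (Fin n) k)
      (D a) = D ((f : MvPolynomial (Fin n) k ≃ₐ[k] MvPolynomial (Fin n) k) a) := fun f => f.2
  have meminv : ∀ f : G₁,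
      (∀ i, (((f : MvPolynomial (Fin n) k ≃ₐ[k] MvPolynomial (Fin n) k))⁻¹
        (X i)).IsHomogeneous 1) ∧
      ∀ a, ((f : MvPolynomial (Fin n) k ≃ₐ[k] MvPolynomial (Fin n) k))⁻¹ (D a) =
        D (((f : MvPolynomial (Fin n) k ≃ₐ[k] MvPolynomial (Fin n) k))⁻¹ a) :=
    fun f => hsymm _ (mem1 f).1 (mem1 f).2
  -- the unit associated to f : G₁
  have key_vi : ∀ f : G₁, mat ((f : MvPolynomial (Fin n) k ≃ₐ[k] MvPolynomial (Fin n) k))⁻¹ *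
      mat (f : MvPolynomial (Fin n) k ≃ₐ[k] MvPolynomial (Fin n) k) = 1 := by
    intro f
    rw [← mat_mul _ _ (meminv f).1, mul_inv_cancel, mat_one]
  have key_iv : ∀ f : G₁, mat (f : MvPolynomial (Fin n) k ≃ₐ[k] MvPolynomial (Fin n) k) *
      mat ((f : MvPolynomial (Fin n) k ≃ₐ[k] MvPolynomial (Fin n) k))⁻¹ = 1 := by
    intro f
    rw [← mat_mul _ _ (mem1 f).1, inv_mul_cancel, mat_one]
  have hmemG₂ : ∀ f : G₁, Matrix.vecMul t
      (mat ((f : MvPolynomial (Fin n) k ≃ₐ[k] MvPolynomial (Fin n) k))⁻¹) = t := by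
    intro f
    have hw := fixes_w t D hD _ (meminv f).1 (meminv f).2
    funext j
    exact row_condition t hw j
  let Φ : G₁ →* G₂ :=
    { toFun := fun f => ⟨⟨mat ((f : MvPolynomial (Fin n) k ≃ₐ[k] MvPolynomial (Fin n) k))⁻¹,
        mat (f : MvPolynomial (Fin n) k ≃ₐ[k] MvPolynomial (Fin n) k),
        key_vi f, key_iv f⟩, hmemG₂ f⟩
      map_one' := by
        apply Subtype.ext
        apply Units.ext
        show mat ((1 : MvPolynomial (Fin n) k ≃ₐ[k] MvPolynomial (Fin n) k))⁻¹ = 1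
        rw [inv_one, mat_one]
      map_mul' := by
        intro f g
        apply Subtype.ext
        apply Units.ext
        show mat ((↑(f * g) : MvPolynomial (Fin n) k ≃ₐ[k] MvPolynomial (Fin n) k))⁻¹ = _
        rw [Subgroup.coe_mul, mul_inv_rev, mat_mul _ _ (meminv f).1]
        rfl }
  refine ⟨G₁, G₂, fun f => Iff.rfl, fun M => ?_, ⟨MulEquiv.ofBijective Φ ⟨?_, ?_⟩⟩⟩
  · -- membership description of G₂
    show Matrix.vecMul t (M : Matrix (Fin n) (Fin n) k) = t ↔ _
    constructor
    · intro h s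
      exact congrFun h s
    · intro h
      funext s
      exact h s
  · -- injectivity
    rw [injective_iff_map_eq_one]
    intro f hf
    have hmat : mat ((f : MvPolynomial (Fin n) k ≃ₐ[k] MvPolynomial (Fin n) k))⁻¹ = 1 :=
      congrArg Units.val (congrArg Subtype.val hf)
    have hX : ∀ i, ((f : MvPolynomial (Fin n) k ≃ₐ[k] MvPolynomial (Fin n) k))⁻¹ (X i) = X i := by
      intro i
      rw [mat_repr (meminv f).1 i, hmat, sum_one_smul]
    have hid : ((f : MvPolynomial (Fin n) k ≃ₐ[k] MvPolynomial (Fin n) k))⁻¹ = 1 := by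
      have := MvPolynomial.algHom_ext
        (f := (((f : MvPolynomial (Fin n) k ≃ₐ[k] MvPolynomial (Fin n) k))⁻¹ :
          MvPolynomial (Fin n) k ≃ₐ[k] MvPolynomial (Fin n) k).toAlgHom)
        (g := AlgHom.id k (MvPolynomial (Fin n) k)) (fun i => hX i)
      apply AlgEquiv.ext
      intro a
      exact DFunLike.congr_fun this a
    apply Subtype.ext
    have := congrArg (·⁻¹) hid
    simpa using this
  · -- surjectivity
    rintro ⟨M, hM⟩
    have hMrow : ∀ s, ∑ j : Fin n, t j * M.val j s = t s := fun s => congrFun hM s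
    have hmemE : linEquiv M ∈ G₁ := by
      refine ⟨linEquiv_hom1 M, fun a => ?_⟩
      exact commute_D t D hLeib hD (linEquiv M : MvPolynomial (Fin n) k →ₐ[k]
        MvPolynomial (Fin n) k) (linEquiv_hom1 M) (linEquiv_fix_w t M hMrow) a
    refine ⟨(⟨linEquiv M, hmemE⟩ : G₁)⁻¹, ?_⟩
    apply Subtype.ext
    apply Units.ext
    show mat ((↑((⟨linEquiv M, hmemE⟩ : G₁)⁻¹) :
      MvPolynomial (Fin n) k ≃ₐ[k] MvPolynomial (Fin n) k))⁻¹ = M.val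
    rw [show ((↑((⟨linEquiv M, hmemE⟩ : G₁)⁻¹)) :
        MvPolynomial (Fin n) k ≃ₐ[k] MvPolynomial (Fin n) k) = (linEquiv M)⁻¹ from rfl,
      inv_inv, mat_linEquiv]
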